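/- The real number ∑_{n=1}^∞ μ(n) 3^{-n} is irrational, where μ is the Möbius function. -/

import Mathlib

open ArithmeticFunction Finset

noncomputable def digitSum (e : ℕ → ℤ) : ℝ := ∑' k, (e k : ℝ) / 3 ^ (k + 1)

lemma third_summable : Summable (fun k : ℕ => (1/3 : ℝ) ^ (k + 1)) := by
  have h := (summable_geometric_of_lt_one (by norm_num) (by norm_num : (1/3:ℝ) < 1)).mul_right (1/3)
  simpa only [← pow_succ] using h

lemma term_bound (e : ℕ → ℤ) (he : ∀ k, |e k| ≤ 1) (k : ℕ) :
    |(e k : ℝ) / 3 ^ (k + 1)| ≤ (1/3 : ℝ) ^ (k + 1) := by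
  have h1 : |(e k : ℝ)| ≤ 1 := by exact_mod_cast he k
  rw [abs_div, abs_of_nonneg (by positivity : (0:ℝ) ≤ 3 ^ (k+1)), div_pow, one_pow]
  gcongr

lemma summable_digit (e : ℕ → ℤ) (he : ∀ k, |e k| ≤ 1) :
    Summable (fun k => (e k : ℝ) / 3 ^ (k + 1)) := by
  apply Summable.of_abs
  exact Summable.of_nonneg_of_le (fun k => abs_nonneg _) (term_bound e he) third_summable

lemma tsum_third_pow : ∑' k : ℕ, (1/3 : ℝ) ^ (k + 1) = 1/2 := by
  have h : ∑' k : ℕ, (1/3 : ℝ) ^ k = (1 - 1/3)⁻¹ :=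
    tsum_geometric_of_lt_one (by norm_num) (by norm_num)
  have h2 : ∑' k : ℕ, (1/3 : ℝ) ^ (k+1) = (1/3) * ∑' k : ℕ, (1/3 : ℝ) ^ k := by
    rw [← tsum_mul_left]
    congr 1 with k
    ring
  rw [h2, h]; norm_num

lemma abs_digitSum_le (e : ℕ → ℤ) (he : ∀ k, |e k| ≤ 1) : |digitSum e| ≤ 1/2 := by
  have hs := summable_digit e he
  have h1 : |digitSum e| ≤ ∑' k, |(e k : ℝ) / 3 ^ (k + 1)| := by
    have h2 := norm_tsum_le_tsum_norm (f := fun k => (e k : ℝ) / 3 ^ (k + 1)) hs.abs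
    simp only [Real.norm_eq_abs] at h2
    exact h2
  refine h1.trans ?_
  rw [← tsum_third_pow]
  exact Summable.tsum_le_tsum (term_bound e he) hs.abs third_summable

lemma digitSum_shift (e : ℕ → ℤ) (he : ∀ k, |e k| ≤ 1) (L : ℕ)
    (h0 : ∀ k < L, e k = 0) :
    digitSum e = (1/3) ^ L * digitSum (fun k => e (k + L)) := by
  have hs := summable_digit e he
  have hspl := Summable.sum_add_tsum_nat_add L hs
  rw [digitSum, ← hspl]
  have hzero : ∑ i ∈ range L, (e i : ℝ) / 3 ^ (i + 1) = 0 := by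
    apply Finset.sum_eq_zero
    intro i hi
    rw [h0 i (Finset.mem_range.mp hi)]; simp
  rw [hzero, zero_add, digitSum, ← tsum_mul_left]
  congr 1 with k
  rw [div_pow, one_pow]
  rw [div_mul_div_comm, one_mul, ← pow_add]
  ring_nf

lemma digitSum_ne_zero (e : ℕ → ℤ) (he : ∀ k, |e k| ≤ 1) (h0 : e 0 ≠ 0) :
    digitSum e ≠ 0 := by
  have hs := summable_digit e he
  have hsplit := Summable.sum_add_tsum_nat_add 1 hs
  have htail : |∑' k, (e (k + 1) : ℝ) / 3 ^ (k + 1 + 1)| ≤ 1/6 := by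
    have h2 : (fun k => (e (k+1) : ℝ) / 3 ^ (k + 1 + 1)) =
        fun k => (1/3) * ((e (k+1) : ℝ) / 3 ^ (k + 1)) := by
      funext k; rw [pow_succ]; ring
    rw [h2, tsum_mul_left, abs_mul]
    have hd := abs_digitSum_le (fun k => e (k+1)) (fun k => he (k+1))
    rw [digitSum] at hd
    rw [abs_of_nonneg (by norm_num : (0:ℝ) ≤ 1/3)]
    nlinarith [abs_nonneg (∑' k, (e (k+1) : ℝ) / 3 ^ (k + 1))]
  have hhead : (1:ℝ)/3 ≤ |(e 0 : ℝ) / 3 ^ (0 + 1)| := by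
    have h1 : (1:ℝ) ≤ |(e 0 : ℝ)| := by
      exact_mod_cast Int.one_le_abs (by omega)
    rw [abs_div, abs_of_nonneg (by norm_num : (0:ℝ) ≤ 3 ^ (0+1))]
    rw [pow_one, le_div_iff₀ (by norm_num)]
    linarith
  have heq : digitSum e = (e 0 : ℝ) / 3 ^ (0 + 1) + ∑' k, (e (k + 1) : ℝ) / 3 ^ (k + 1 + 1) := by
    rw [digitSum, ← hsplit]
    simp
  intro hzero
  rw [hzero] at heq
  have h3 : ∑' k, (e (k + 1) : ℝ) / 3 ^ (k + 1 + 1) = -((e 0 : ℝ) / 3 ^ (0 + 1)) := by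
    linarith
  rw [h3, abs_neg] at htail
  linarith


lemma solve_crt (M m c : ℕ) (p : ℕ) (hp : p.Prime) (hcop : Nat.Coprime M (p^2)) :
    ∃ t : ℕ, p^2 ∣ m + t * M + c := by
  have hne : NeZero (p^2) := ⟨pow_ne_zero 2 hp.ne_zero⟩
  have hu : IsUnit (M : ZMod (p^2)) := (ZMod.isUnit_iff_coprime M (p^2)).mpr hcop
  set u : ZMod (p^2) := (-(((m + c : ℕ) : ZMod (p^2)))) * (M : ZMod (p^2))⁻¹ with hu_def
  refine ⟨u.val, ?_⟩
  rw [← ZMod.natCast_eq_zero_iff]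
  push_cast
  rw [ZMod.natCast_zmod_val]
  have h1 : u * (M : ZMod (p^2)) = -(((m + c : ℕ) : ZMod (p^2))) := by
    rw [hu_def, mul_assoc, ZMod.inv_mul_of_unit _ hu, mul_one]
  push_cast at h1
  linear_combination h1

lemma zero_run (L : ℕ) : ∃ m M : ℕ, 0 < M ∧
    ∀ k < L, ∃ p : ℕ, p.Prime ∧ p^2 ∣ (m + k + 1) ∧ p^2 ∣ M := by
  induction L with
  | zero => exact ⟨0, 1, one_pos, by omega⟩
  | succ L ih =>
    obtain ⟨m, M, hM, h⟩ := ih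
    obtain ⟨p, hpM, hp⟩ := Nat.exists_infinite_primes (M + 1)
    have hpd : ¬ p ∣ M := fun hd => by
      have := Nat.le_of_dvd hM hd
      omega
    have hcop : Nat.Coprime M (p^2) :=
      (Nat.coprime_comm.mp ((Nat.Prime.coprime_iff_not_dvd hp).mpr hpd)).pow_right 2
    obtain ⟨t, ht⟩ := solve_crt M m (L + 1) p hp hcop
    refine ⟨m + t * M, M * p^2, Nat.mul_pos hM (pow_pos hp.pos 2), ?_⟩
    intro k hk
    rcases Nat.lt_succ_iff_lt_or_eq.mp hk with hkL | hkL
    · obtain ⟨q, hq, hq1, hq2⟩ := h k hkL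
      refine ⟨q, hq, ?_, hq2.mul_right _⟩
      have he : m + t * M + k + 1 = (m + k + 1) + t * M := by ring
      rw [he]
      exact Nat.dvd_add hq1 (hq2.mul_left t)
    · subst hkL
      exact ⟨p, hp, by rwa [← add_assoc] at ht, dvd_mul_left (p^2) M⟩

theorem stmt_7 :
    Irrational (∑' n : ℕ,
      ((ArithmeticFunction.moebius (n + 1) : ℝ)) / 3 ^ (n + 1)) := by
  rw [Irrational]
  rintro ⟨q, hq⟩
  set x : ℝ := ∑' n : ℕ, ((ArithmeticFunction.moebius (n + 1) : ℝ)) / 3 ^ (n + 1) with hxdef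
  set L : ℕ := q.den with hLdef
  obtain ⟨m, M, hM, hrun⟩ := zero_run L
  set e : ℕ → ℤ := fun k => moebius (k + m + 1) with hedef
  have he : ∀ k, |e k| ≤ 1 := fun k => abs_moebius_le_one
  have hzero : ∀ k < L, e k = 0 := by
    intro k hk
    obtain ⟨p, hp, hp1, -⟩ := hrun k hk
    have hns : ¬ Squarefree (k + m + 1) := by
      intro hsq
      have h2 : p * p ∣ k + m + 1 := by
        rw [← pow_two]
        convert hp1 using 2
        omega
      have := Nat.isUnit_iff.mp (hsq p h2)
      exact hp.one_lt.ne' this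
    simpa [hedef] using moebius_eq_zero_of_not_squarefree hns
  -- a nonzero digit exists
  have hex : ∃ k, e k ≠ 0 := by
    obtain ⟨p, hpm, hp⟩ := Nat.exists_infinite_primes (m + 2)
    refine ⟨p - m - 1, ?_⟩
    have harg : (p - m - 1) + m + 1 = p := by omega
    rw [hedef]
    simp only [harg, moebius_apply_prime hp]
    decide
  set j : ℕ := Nat.find hex with hjdef
  have hj : e j ≠ 0 := Nat.find_spec hex
  have hjmin : ∀ i < j, e i = 0 := fun i hi => of_not_not (Nat.find_min hex hi)
  -- digitSum e is nonzero and small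
  have hSne : digitSum e ≠ 0 := by
    rw [digitSum_shift e he j hjmin]
    refine mul_ne_zero (by positivity) ?_
    exact digitSum_ne_zero _ (fun k => he (k + j)) (by simpa using hj)
  have hSsmall : |digitSum e| ≤ (1/3 : ℝ) ^ L * (1/2) := by
    rw [digitSum_shift e he L hzero, abs_mul, abs_of_nonneg (by positivity : (0:ℝ) ≤ (1/3:ℝ)^L)]
    exact mul_le_mul_of_nonneg_left (abs_digitSum_le _ (fun k => he (k + L))) (by positivity)
  -- split x
  have hs : Summable (fun n : ℕ => ((moebius (n + 1) : ℝ)) / 3 ^ (n + 1)) :=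
    summable_digit (fun n => moebius (n + 1)) (fun n => abs_moebius_le_one)
  have hsplit := Summable.sum_add_tsum_nat_add m hs
  have htaileq : (∑' i : ℕ, ((moebius (i + m + 1) : ℝ)) / 3 ^ (i + m + 1))
      = (1/3 : ℝ) ^ m * digitSum e := by
    rw [digitSum, ← tsum_mul_left]
    congr 1 with k
    rw [hedef]
    have h3 : (3:ℝ) ^ (k + m + 1) = 3 ^ (k + 1) * 3 ^ m := by
      rw [← pow_add]; congr 1; omega
    rw [div_pow, one_pow, h3, ← div_div, one_div_mul_eq_div]
  have hxeq : x = (∑ n ∈ range m, ((moebius (n + 1) : ℝ)) / 3 ^ (n + 1))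
      + (1/3 : ℝ) ^ m * digitSum e := by
    rw [hxdef, ← hsplit, ← htaileq]
  -- the head is 3^(-m) times an integer
  set A : ℤ := ∑ n ∈ range m, moebius (n + 1) * 3 ^ (m - n - 1) with hAdef
  have hA : ((A : ℤ) : ℝ) = 3 ^ m * ∑ n ∈ range m, ((moebius (n + 1) : ℝ)) / 3 ^ (n + 1) := by
    rw [hAdef, Finset.mul_sum]
    push_cast
    apply Finset.sum_congr rfl
    intro n hn
    have hnm : n < m := Finset.mem_range.mp hn
    have h3 : (3:ℝ) ^ (m - n - 1) * 3 ^ (n + 1) = 3 ^ m := by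
      rw [← pow_add]; congr 1; omega
    field_simp
    linear_combination ((moebius (n+1) : ℝ)) * h3
  -- q.den * x = q.num
  have hden0 : (q.den : ℝ) ≠ 0 := by
    exact_mod_cast q.den_nz
  have hnum : (q.num : ℝ) = (q.den : ℝ) * x := by
    have h1 : ((q.num : ℚ) / (q.den : ℚ) : ℚ) = q := Rat.num_div_den q
    have h2 : (q.num : ℝ) / (q.den : ℝ) = x := by
      rw [← hq]
      exact_mod_cast congrArg (fun r : ℚ => (r : ℝ)) h1
    field_simp at h2
    linarith [h2]
  set z : ℤ := 3 ^ m * q.num - q.den * A with hzdef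
  have hz : ((z : ℤ) : ℝ) = (q.den : ℝ) * digitSum e := by
    rw [hzdef]
    push_cast
    rw [hnum, hA, hxeq]
    have h33 : (3:ℝ) ^ m * (1/3 : ℝ) ^ m = 1 := by
      rw [← mul_pow]; norm_num
    linear_combination (q.den : ℝ) * digitSum e * h33
  have hzne : z ≠ 0 := by
    intro h0
    rw [h0, Int.cast_zero] at hz
    exact (mul_ne_zero hden0 hSne) hz.symm
  have hone : (1:ℝ) ≤ |((z : ℤ) : ℝ)| := by
    exact_mod_cast Int.one_le_abs hzne
  have hdenlt : (q.den : ℝ) < 3 ^ L := by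
    exact_mod_cast Nat.lt_pow_self (n := q.den) (by norm_num)
  have h3L : (0:ℝ) < 3 ^ L := by positivity
  have hsmall : |((z : ℤ) : ℝ)| < 1 := by
    rw [hz, abs_mul, abs_of_nonneg (by positivity : (0:ℝ) ≤ (q.den:ℝ))]
    calc (q.den : ℝ) * |digitSum e| ≤ (q.den : ℝ) * ((1/3:ℝ)^L * (1/2)) := by
          exact mul_le_mul_of_nonneg_left hSsmall (by positivity)
      _ < 1 := by
          rw [div_pow, one_pow]
          rw [mul_comm ((1:ℝ)/3^L) (1/2)]
          rw [← mul_assoc]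
          rw [mul_one_div]
          rw [div_lt_one h3L]
          nlinarith
  linarith
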